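/- arXiv:2405.09688 — 3 statements merged into one kernel-verified Lean document; each statement's English description precedes it below -/
import Mathlib

section
/- Let g : ℝ → ℝ be continuously differentiable on ℝ \ {0}, with g(w) = g(|w|), g(0)=0, g increasing to ∞. Suppose λ* > 0 minimizes R(λ) = Σ_{w∈IN} g(λw) + Σ_{w∈OUT} g(w/λ) over λ ∈ (0,∞), with all weights nonzero. Then (λ*)² Σ_{w∈IN} w·g'(λ*w) = Σ_{w∈OUT} w·g'(w/λ*), and consequently the rescaled weights v (v = λ*w for w ∈ IN, v = w/λ* for w ∈ OUT) satisfy Σ_{v∈IN} v·g'(v) = Σ_{v∈OUT} v·g'(v). -/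
theorem balance_optimality_conditions {I J : Type*} [Fintype I] [Fintype J]
    (g : ℝ → ℝ)
    (hdiff : ∀ x : ℝ, x ≠ 0 → DifferentiableAt ℝ g x)
    (hderiv_cont : ContinuousOn (deriv g) {x : ℝ | x ≠ 0})
    (habs : ∀ w : ℝ, g w = g |w|) (h0 : g 0 = 0)
    (hmono : StrictMonoOn g (Set.Ici 0))
    (htop : Filter.Tendsto g Filter.atTop Filter.atTop)
    (u : I → ℝ) (v : J → ℝ) (hu : ∀ i, u i ≠ 0) (hv : ∀ j, v j ≠ 0)
    (l : ℝ) (hl : 0 < l)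
    (hmin : IsMinOn (fun t : ℝ => ∑ i, g (t * u i) + ∑ j, g (v j / t)) (Set.Ioi 0) l) :
    l ^ 2 * ∑ i, u i * deriv g (l * u i) = ∑ j, v j * deriv g (v j / l) ∧
    ∑ i, (l * u i) * deriv g (l * u i) = ∑ j, (v j / l) * deriv g (v j / l) := by
  have hl0 : l ≠ 0 := hl.ne'
  have hD : HasDerivAt (fun t : ℝ => ∑ i, g (t * u i) + ∑ j, g (v j / t))
      ((∑ i, deriv g (l * u i) * u i) + ∑ j, deriv g (v j / l) * (-(v j / l ^ 2))) l := by
    apply HasDerivAt.add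
    · apply HasDerivAt.fun_sum
      intro i _
      have h1 : HasDerivAt (fun t : ℝ => t * u i) (u i) l := by
        simpa using (hasDerivAt_id l).mul_const (u i)
      exact ((hdiff (l * u i) (mul_ne_zero hl0 (hu i))).hasDerivAt).comp l h1
    · apply HasDerivAt.fun_sum
      intro j _
      have h1 : HasDerivAt (fun t : ℝ => v j / t) (-(v j / l ^ 2)) l := by
        simpa [div_eq_mul_inv, neg_div, mul_div_assoc] using
          ((hasDerivAt_inv hl0).const_mul (v j))
      exact ((hdiff (v j / l) (div_ne_zero (hv j) hl0)).hasDerivAt).comp l h1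
  have hloc : IsLocalMin (fun t : ℝ => ∑ i, g (t * u i) + ∑ j, g (v j / t)) l :=
    hmin.isLocalMin (Ioi_mem_nhds hl)
  have hzero := hloc.hasDerivAt_eq_zero hD
  have key : l ^ 2 * ∑ i, u i * deriv g (l * u i) = ∑ j, v j * deriv g (v j / l) := by
    have h2 : (∑ i, deriv g (l * u i) * u i) = (∑ j, deriv g (v j / l) * (v j / l ^ 2)) := by
      have := hzero
      rw [← sub_eq_zero]
      simpa [Finset.sum_neg_distrib, sub_eq_add_neg, mul_neg] using this
    have h3 := congrArg (fun x => l ^ 2 * x) h2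
    simp only [Finset.mul_sum] at h3 ⊢
    convert h3 using 2 with i j
    · ring
    · field_simp
  refine ⟨key, ?_⟩
  have h4 := congrArg (fun x => x / l) key
  simp only [Finset.mul_sum, Finset.sum_div] at h4 ⊢
  convert h4 using 2 with i j
  · field_simp
  · ring
end

section
/- Let f : [0,1] → ℝ be continuous and ε > 0. Then there exist N ∈ ℕ, slopes λ_1,...,λ_N ∈ ℝ, output weights β_0, β_1, ..., β_N ∈ ℝ such that for all x ∈ [0,1], |f(x) − (β_0 + Σ_{k=1}^N β_k·g_{λ_k}(x − (k−1)/N))| < ε, where g_λ(x) = 0 for x < 0 and g_λ(x) = λx for x ≥ 0. -/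
/-- ReLU-type activation with slope `l`: `g_l(x) = 0` for `x < 0`, `l * x` for `x ≥ 0`. -/
noncomputable def reluSlope (l x : ℝ) : ℝ := if x < 0 then 0 else l * x

theorem bilu_universal_approximation (f : ℝ → ℝ)
    (hf : ContinuousOn f (Set.Icc 0 1)) (ε : ℝ) (hε : 0 < ε) :
    ∃ (N : ℕ), 0 < N ∧ ∃ (lam β : Fin N → ℝ) (β₀ : ℝ),
      ∀ x ∈ Set.Icc (0 : ℝ) 1,
        |f x - (β₀ + ∑ k : Fin N, β k * reluSlope (lam k) (x - (k : ℕ) / N))| < ε := by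
  have hUC : UniformContinuousOn f (Set.Icc 0 1) :=
    isCompact_Icc.uniformContinuousOn_of_continuous hf
  rw [Metric.uniformContinuousOn_iff] at hUC
  obtain ⟨δ, hδ, hδf⟩ := hUC ε hε
  obtain ⟨N, hNδ⟩ := exists_nat_gt (1/δ)
  have hNR : (0:ℝ) < N := lt_trans (one_div_pos.mpr hδ) hNδ
  have hN0 : 0 < N := by exact_mod_cast hNR
  have hNne : (N:ℝ) ≠ 0 := ne_of_gt hNR
  have h1N : 1/(N:ℝ) < δ := by
    rw [div_lt_iff₀ hNR]
    nlinarith [(div_lt_iff₀ hδ).mp hNδ]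
  set Mv : ℕ → ℝ := fun k => f (k / N) with hMv
  set m : ℕ → ℝ := fun k => N * (Mv (k+1) - Mv k) with hm
  set c : ℕ → ℝ := fun k => m k - (if k = 0 then 0 else m (k-1)) with hc
  refine ⟨N, hN0, fun _ => 1, fun k => c k.1, f 0, ?_⟩
  intro x hx
  obtain ⟨hx0, hx1⟩ := hx
  obtain ⟨j, hjN, hjle, hjge⟩ : ∃ j : ℕ, j < N ∧ (j:ℝ)/N ≤ x ∧ x ≤ ((j:ℝ)+1)/N := by
    by_cases hx1' : x = 1
    · refine ⟨N-1, Nat.sub_lt hN0 one_pos, ?_, ?_⟩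
      · have hcast : ((N-1:ℕ):ℝ) = (N:ℝ) - 1 := by
          rw [Nat.cast_sub hN0]; norm_num
        rw [hcast, hx1', div_le_one hNR]; linarith
      · have hcast : ((N-1:ℕ):ℝ) = (N:ℝ) - 1 := by
          rw [Nat.cast_sub hN0]; norm_num
        rw [hcast, hx1', le_div_iff₀ hNR]; linarith
    · have hxlt : x < 1 := lt_of_le_of_ne hx1 hx1'
      refine ⟨⌊(N:ℝ)*x⌋₊, ?_, ?_, ?_⟩
      · have hlt : (N:ℝ)*x < N := by nlinarith
        rw [Nat.floor_lt (by positivity)]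
        exact_mod_cast hlt
      · rw [div_le_iff₀ hNR]
        calc (⌊(N:ℝ)*x⌋₊ : ℝ) ≤ N*x := Nat.floor_le (by positivity)
          _ = x*N := mul_comm _ _
      · rw [le_div_iff₀ hNR]
        calc x*N = N*x := mul_comm _ _
          _ ≤ (⌊(N:ℝ)*x⌋₊:ℝ) + 1 := (Nat.lt_floor_add_one ((N:ℝ)*x)).le
  have key : ∀ j : ℕ, ∑ k ∈ Finset.range (j+1), c k * (x - k/N)
      = (Mv j - Mv 0) + m j * (x - j/N) := by
    intro j
    induction j with
    | zero => simp [hc]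
    | succ n ih =>
      rw [Finset.sum_range_succ, ih]
      have hcn : c (n+1) = m (n+1) - m n := by simp [hc]
      have hmn : Mv (n+1) = Mv n + m n / N := by
        rw [hm]; field_simp; ring
      rw [hcn, hmn]
      push_cast
      field_simp
      ring
  have hrelu_pos : ∀ y : ℝ, 0 ≤ y → reluSlope 1 y = y := by
    intro y hy; simp [reluSlope, not_lt.mpr hy]
  have hrelu_neg : ∀ y : ℝ, y ≤ 0 → reluSlope 1 y = 0 := by
    intro y hy
    unfold reluSlope
    split
    · rfl
    · next h => rw [le_antisymm hy (not_lt.mp h), mul_zero]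
  have hsum : ∑ k : Fin N, c k.1 * reluSlope 1 (x - (k:ℕ)/N)
      = ∑ k ∈ Finset.range (j+1), c k * (x - k/N) := by
    rw [Fin.sum_univ_eq_sum_range (fun k => c k * reluSlope 1 (x - k/N)) N]
    rw [← Finset.sum_range_add_sum_Ico _ (Nat.succ_le_of_lt hjN)]
    have h2 : ∑ k ∈ Finset.Ico (j+1) N, c k * reluSlope 1 (x - k/N) = 0 := by
      apply Finset.sum_eq_zero
      intro k hk
      obtain ⟨hk1, hk2⟩ := Finset.mem_Ico.mp hk
      have hkk : (j:ℝ)+1 ≤ k := by exact_mod_cast hk1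
      have hle : ((j:ℝ)+1)/N ≤ (k:ℝ)/N := by gcongr
      have : x - (k:ℝ)/N ≤ 0 := by linarith
      rw [hrelu_neg _ this, mul_zero]
    rw [h2, add_zero]
    apply Finset.sum_congr rfl
    intro k hk
    have hk' : k ≤ j := Nat.lt_succ_iff.mp (Finset.mem_range.mp hk)
    have hkk : (k:ℝ) ≤ j := by exact_mod_cast hk'
    have hle : (k:ℝ)/N ≤ (j:ℝ)/N := by gcongr
    have : 0 ≤ x - (k:ℝ)/N := by linarith
    rw [hrelu_pos _ this]
  have hnet : f 0 + ∑ k : Fin N, c k.1 * reluSlope 1 (x - (k:ℕ)/N)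
      = Mv j + m j * (x - j/N) := by
    rw [hsum, key]
    have hMv0 : Mv 0 = f 0 := by simp [hMv]
    linarith
  show |f x - (f 0 + ∑ k : Fin N, c k.1 * reluSlope 1 (x - (k:ℕ)/N))| < ε
  rw [hnet]
  set t := (N:ℝ)*(x - (j:ℝ)/N) with ht
  have hub : x - (j:ℝ)/N ≤ 1/N := by
    have hadd : ((j:ℝ)+1)/N = (j:ℝ)/N + 1/N := add_div _ _ _
    linarith [hjge]
  have ht0 : 0 ≤ t := mul_nonneg hNR.le (by linarith)
  have ht1 : t ≤ 1 := by
    have h := mul_le_mul_of_nonneg_left hub hNR.le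
    rw [mul_one_div, div_self hNne] at h
    exact h
  have hconv : Mv j + m j * (x - (j:ℝ)/N) = (1-t)*Mv j + t*Mv (j+1) := by
    rw [hm, ht]; ring
  have hmem1 : (j:ℝ)/N ∈ Set.Icc (0:ℝ) 1 := by
    constructor
    · positivity
    · rw [div_le_one hNR]; exact_mod_cast hjN.le
  have hmem2 : ((j:ℝ)+1)/N ∈ Set.Icc (0:ℝ) 1 := by
    constructor
    · positivity
    · rw [div_le_one hNR]
      have : (j:ℝ)+1 ≤ N := by exact_mod_cast hjN
      linarith
  have hd1 : |f x - Mv j| < ε := by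
    have hdist : dist x ((j:ℝ)/N) < δ := by
      rw [Real.dist_eq, abs_of_nonneg (by linarith)]
      linarith
    have := hδf x ⟨hx0, hx1⟩ ((j:ℝ)/N) hmem1 hdist
    rw [Real.dist_eq] at this
    exact this
  have hd2 : |f x - Mv (j+1)| < ε := by
    have hdist : dist x (((j:ℝ)+1)/N) < δ := by
      rw [Real.dist_eq, abs_of_nonpos (by linarith), neg_sub]
      have hadd : ((j:ℝ)+1)/N = (j:ℝ)/N + 1/N := add_div _ _ _
      linarith
    have h := hδf x ⟨hx0, hx1⟩ (((j:ℝ)+1)/N) hmem2 hdist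
    rw [Real.dist_eq] at h
    have hMvc : Mv (j+1) = f (((j:ℝ)+1)/N) := by
      rw [hMv]; push_cast; ring_nf
    rw [hMvc]
    exact h
  rw [hconv]
  have heq : f x - ((1-t)*Mv j + t*Mv (j+1))
      = (1-t)*(f x - Mv j) + t*(f x - Mv (j+1)) := by ring
  rw [heq]
  calc |(1-t)*(f x - Mv j) + t*(f x - Mv (j+1))|
      ≤ (1-t)*|f x - Mv j| + t*|f x - Mv (j+1)| := by
        refine (abs_add_le _ _).trans ?_
        rw [abs_mul, abs_mul, abs_of_nonneg (by linarith : (0:ℝ) ≤ 1-t), abs_of_nonneg ht0]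
    _ < ε := by
        set A := |f x - Mv j|
        set B := |f x - Mv (j+1)|
        rcases le_or_gt t (1/2) with h | h
        · nlinarith [mul_pos (show (0:ℝ) < 1-t by linarith) (show (0:ℝ) < ε - A by linarith),
            mul_nonneg ht0 (show (0:ℝ) ≤ ε - B by linarith)]
        · nlinarith [mul_pos (show (0:ℝ) < t by linarith) (show (0:ℝ) < ε - B by linarith),
            mul_nonneg (show (0:ℝ) ≤ 1-t by linarith) (show (0:ℝ) ≤ ε - A by linarith)]
end

section
/- Let p > 0 and suppose a finite family of positive reals (M_e)_{e∈E} (edge multipliers) minimizes R(M) = Σ_{e∈E} M_eᵖ·|w_e|ᵖ over the set of multipliers arising as M_e = Λ_i/Λ_j (edge e from unit j to unit i) from positive unit multipliers Λ with Λ fixed to 1 on visible units. Then at this minimum, every hidden unit i is balanced: Σ_{e∈IN(i)} (M_e)ᵖ|w_e|ᵖ = Σ_{e∈OUT(i)} (M_e)ᵖ|w_e|ᵖ. (Otherwise, rescaling unit i alone would strictly decrease R, contradicting minimality.) -/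
theorem key_balanced (A B : ℝ) (hA : 0 ≤ A) (hB : 0 ≤ B)
    (h : ∀ s : ℝ, 0 < s → A + B ≤ s * A + s⁻¹ * B) : A = B := by
  have hq : ∀ s : ℝ, 0 < s → 0 ≤ (s - 1) * (A * s - B) := by
    intro s hs
    have h1 := h s hs
    have h2 : s * s⁻¹ = 1 := mul_inv_cancel₀ hs.ne'
    nlinarith [mul_le_mul_of_nonneg_left h1 hs.le]
  by_contra hne
  rcases lt_or_gt_of_ne hne with hlt | hgt
  · rcases eq_or_lt_of_le hA with hA0 | hApos
    · have := hq 2 (by norm_num)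
      nlinarith
    · have hs : (0:ℝ) < (A + B) / (2 * A) := by positivity
      have hprod := hq _ hs
      have h1 : 0 < (A + B) / (2 * A) - 1 := by
        rw [sub_pos, lt_div_iff₀ (by linarith)]; linarith
      have h2 : A * ((A + B) / (2 * A)) - B < 0 := by
        have : A * ((A + B) / (2 * A)) = (A + B) / 2 := by
          field_simp
        rw [this]; linarith
      nlinarith [mul_pos_of_neg_of_neg h2 h2]
  · have hApos : 0 < A := lt_of_le_of_lt hB hgt
    have hs : (0:ℝ) < (A + B) / (2 * A) := by positivity
    have hprod := hq _ hs
    have h1 : (A + B) / (2 * A) - 1 < 0 := by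
      rw [sub_neg, div_lt_one (by linarith)]; linarith
    have h2 : 0 < A * ((A + B) / (2 * A)) - B := by
      have : A * ((A + B) / (2 * A)) = (A + B) / 2 := by
        field_simp
      rw [this]; linarith
    nlinarith [mul_neg_of_neg_of_pos h1 h2]

theorem minimizer_is_balanced
    {U E : Type*} [Fintype U] [Fintype E] [DecidableEq U]
    (src tgt : E → U) (w : E → ℝ) (hw : ∀ e, w e ≠ 0)
    (hidden : U → Prop) [DecidablePred hidden]
    (p : ℝ) (hp : 0 < p)
    (Λ : U → ℝ) (hΛpos : ∀ u, 0 < Λ u) (hΛvis : ∀ u, ¬ hidden u → Λ u = 1)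
    (hmin : ∀ Λ' : U → ℝ, (∀ u, 0 < Λ' u) → (∀ u, ¬ hidden u → Λ' u = 1) →
      ∑ e, (Λ (tgt e) / Λ (src e)) ^ p * |w e| ^ p ≤
        ∑ e, (Λ' (tgt e) / Λ' (src e)) ^ p * |w e| ^ p) :
    ∀ i : U, hidden i →
      ∑ e ∈ Finset.univ.filter (fun e => tgt e = i),
          (Λ (tgt e) / Λ (src e)) ^ p * |w e| ^ p =
        ∑ e ∈ Finset.univ.filter (fun e => src e = i),
          (Λ (tgt e) / Λ (src e)) ^ p * |w e| ^ p := by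
  intro i hi
  set T : E → ℝ := fun e => (Λ (tgt e) / Λ (src e)) ^ p * |w e| ^ p with hT
  -- the three relevant edge sets
  set Pin : Finset E := Finset.univ.filter (fun e => tgt e = i ∧ ¬ src e = i) with hPin
  set Pout : Finset E := Finset.univ.filter (fun e => src e = i ∧ ¬ tgt e = i) with hPout
  set Prest : Finset E :=
    Finset.univ.filter (fun e => ¬(tgt e = i ∧ ¬ src e = i) ∧ ¬(src e = i ∧ ¬ tgt e = i)) with hPrest
  have hpart : ∀ f : E → ℝ, ∑ e, f e = ∑ e ∈ Pin, f e + ∑ e ∈ Pout, f e + ∑ e ∈ Prest, f e := by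
    intro f
    have h1 := Finset.sum_filter_add_sum_filter_not Finset.univ (fun e => tgt e = i ∧ ¬ src e = i) f
    have h2 := Finset.sum_filter_add_sum_filter_not
        (Finset.univ.filter (fun e => ¬(tgt e = i ∧ ¬ src e = i))) (fun e => src e = i ∧ ¬ tgt e = i) f
    have e1 : (Finset.univ.filter (fun e => ¬(tgt e = i ∧ ¬ src e = i))).filter
        (fun e => src e = i ∧ ¬ tgt e = i) = Pout := by
      rw [Finset.filter_filter, hPout]
      apply Finset.filter_congr
      intro e _; constructor
      · rintro ⟨_, h⟩; exact h
      · intro h; exact ⟨fun h' => h.2 h'.1, h⟩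
    have e2 : (Finset.univ.filter (fun e => ¬(tgt e = i ∧ ¬ src e = i))).filter
        (fun e => ¬(src e = i ∧ ¬ tgt e = i)) = Prest := by
      rw [Finset.filter_filter, hPrest]
    rw [e1, e2] at h2
    rw [← h1, ← h2, hPin]
    ring
  -- key perturbation inequality
  have hkey : ∀ s : ℝ, 0 < s →
      ∑ e ∈ Pin, T e + ∑ e ∈ Pout, T e ≤ s * ∑ e ∈ Pin, T e + s⁻¹ * ∑ e ∈ Pout, T e := by
    intro s hs
    set t : ℝ := s ^ p⁻¹ with ht
    have htpos : 0 < t := Real.rpow_pos_of_pos hs _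
    have htp : t ^ p = s := Real.rpow_inv_rpow hs.le hp.ne'
    set Λ' : U → ℝ := fun u => if u = i then t * Λ u else Λ u with hΛ'
    have hΛ'pos : ∀ u, 0 < Λ' u := by
      intro u; simp only [hΛ']
      split <;> [exact mul_pos htpos (hΛpos u); exact hΛpos u]
    have hΛ'vis : ∀ u, ¬ hidden u → Λ' u = 1 := by
      intro u hu
      have : u ≠ i := fun h => hu (h ▸ hi)
      simp only [hΛ', if_neg this]; exact hΛvis u hu
    have hle := hmin Λ' hΛ'pos hΛ'vis
    rw [hpart (fun e => (Λ (tgt e) / Λ (src e)) ^ p * |w e| ^ p),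
        hpart (fun e => (Λ' (tgt e) / Λ' (src e)) ^ p * |w e| ^ p)] at hle
    have hin : ∑ e ∈ Pin, (Λ' (tgt e) / Λ' (src e)) ^ p * |w e| ^ p = s * ∑ e ∈ Pin, T e := by
      rw [Finset.mul_sum]
      apply Finset.sum_congr rfl
      intro e he
      rw [hPin, Finset.mem_filter] at he
      obtain ⟨-, het, hes⟩ := he
      simp only [hΛ', if_pos het, if_neg hes]
      rw [mul_div_assoc, Real.mul_rpow htpos.le (div_nonneg (hΛpos _).le (hΛpos _).le), htp, hT, mul_assoc]
    have hout : ∑ e ∈ Pout, (Λ' (tgt e) / Λ' (src e)) ^ p * |w e| ^ p = s⁻¹ * ∑ e ∈ Pout, T e := by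
      rw [Finset.mul_sum]
      apply Finset.sum_congr rfl
      intro e he
      rw [hPout, Finset.mem_filter] at he
      obtain ⟨-, hes, het⟩ := he
      simp only [hΛ', if_pos hes, if_neg het]
      have : Λ (tgt e) / (t * Λ (src e)) = t⁻¹ * (Λ (tgt e) / Λ (src e)) := by
        field_simp
      rw [this, Real.mul_rpow (inv_nonneg.mpr htpos.le) (div_nonneg (hΛpos _).le (hΛpos _).le),
          Real.inv_rpow htpos.le, htp, hT, mul_assoc]
    have hrest : ∑ e ∈ Prest, (Λ' (tgt e) / Λ' (src e)) ^ p * |w e| ^ p = ∑ e ∈ Prest, T e := by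
      apply Finset.sum_congr rfl
      intro e he
      rw [hPrest, Finset.mem_filter] at he
      obtain ⟨-, h1, h2⟩ := he
      by_cases het : tgt e = i
      · have hes : src e = i := by
          by_contra hes; exact h1 ⟨het, hes⟩
        simp only [hΛ', if_pos het, if_pos hes, hT]
        rw [mul_div_mul_left _ _ htpos.ne']
      · have hes : ¬ src e = i := fun hes => h2 ⟨hes, het⟩
        simp only [hΛ', if_neg het, if_neg hes, hT]
    rw [hin, hout, hrest] at hle
    linarith
  have hTnonneg : ∀ (s : Finset E), 0 ≤ ∑ e ∈ s, T e := by
    intro s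
    apply Finset.sum_nonneg
    intro e _
    exact mul_nonneg (Real.rpow_nonneg (div_nonneg (hΛpos _).le (hΛpos _).le) _)
      (Real.rpow_nonneg (abs_nonneg _) _)
  have hAB := key_balanced _ _ (hTnonneg Pin) (hTnonneg Pout) hkey
  -- now relate the goal sums to Pin / Pout sums plus the self-loop sum
  have hinsplit : ∑ e ∈ Finset.univ.filter (fun e => tgt e = i), T e =
      ∑ e ∈ Finset.univ.filter (fun e => tgt e = i ∧ src e = i), T e + ∑ e ∈ Pin, T e := by
    rw [← Finset.sum_filter_add_sum_filter_not (Finset.univ.filter (fun e => tgt e = i))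
        (fun e => src e = i) T, Finset.filter_filter, Finset.filter_filter]
  have houtsplit : ∑ e ∈ Finset.univ.filter (fun e => src e = i), T e =
      ∑ e ∈ Finset.univ.filter (fun e => tgt e = i ∧ src e = i), T e + ∑ e ∈ Pout, T e := by
    rw [← Finset.sum_filter_add_sum_filter_not (Finset.univ.filter (fun e => src e = i))
        (fun e => tgt e = i) T, Finset.filter_filter, Finset.filter_filter]
    congr 2
    apply Finset.filter_congr
    intro e _
    simp [and_comm]
  show ∑ e ∈ Finset.univ.filter (fun e => tgt e = i), T e =
      ∑ e ∈ Finset.univ.filter (fun e => src e = i), T e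
  rw [hinsplit, houtsplit, hAB]
end
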